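/- arXiv:2303.02636 — 2 statements merged into one kernel-verified Lean document; each statement's English description precedes it below -/
import Mathlib

section
/- Let R := End_K(V) for V an infinite-dimensional vector space over a field K, and let I ⊆ R be the two-sided ideal of endomorphisms of finite rank. Then Hom_R(R/I, R) = 0 while R/I ≠ 0; in particular R is not a cogenerator of R-Mod. -/
/-- The two-sided ideal of finite-rank endomorphisms, viewed as a left submodule
of `R = End_K(V)` over itself. -/
def finRankIdeal (K V : Type) [Field K] [AddCommGroup V] [Module K V] :
    Submodule (Module.End K V) (Module.End K V) where
  carrier := {ψ : Module.End K V | FiniteDimensional K (LinearMap.range ψ)}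
  add_mem' := by
    intro ψ χ hψ hχ
    have h : LinearMap.range (ψ + χ) ≤ LinearMap.range ψ ⊔ LinearMap.range χ := by
      rintro _ ⟨v, rfl⟩
      exact Submodule.add_mem_sup (LinearMap.mem_range_self ψ v) (LinearMap.mem_range_self χ v)
    haveI : FiniteDimensional K ↥(LinearMap.range ψ) := hψ
    haveI : FiniteDimensional K ↥(LinearMap.range χ) := hχ
    have : FiniteDimensional K ↥(LinearMap.range ψ ⊔ LinearMap.range χ) :=
      Submodule.finiteDimensional_sup _ _
    exact Submodule.finiteDimensional_of_le h
  zero_mem' := by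
    show FiniteDimensional K ↥(LinearMap.range (0 : Module.End K V))
    rw [LinearMap.range_zero]
    infer_instance
  smul_mem' := by
    intro φ ψ hψ
    show FiniteDimensional K ↥(LinearMap.range (φ * ψ))
    rw [Module.End.mul_eq_comp, LinearMap.range_comp]
    haveI : FiniteDimensional K ↥(LinearMap.range ψ) := hψ
    exact Module.Finite.map _ _

/-- For `R := End_K(V)` with `V` an infinite-dimensional `K`-vector space and `I ⊆ R`
the ideal of finite-rank endomorphisms, `Hom_R(R/I, R) = 0` while `R/I ≠ 0`; in
particular `R` is not a cogenerator of `R`-Mod. -/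
theorem end_not_cogenerator (K V : Type) [Field K] [AddCommGroup V] [Module K V]
    (hV : ¬ Module.Finite K V) :
    (∀ f : (Module.End K V ⧸ finRankIdeal K V) →ₗ[Module.End K V] Module.End K V, f = 0) ∧
    Nontrivial (Module.End K V ⧸ finRankIdeal K V) ∧
    ¬ (∀ (N : Type) [AddCommGroup N] [Module (Module.End K V) N],
        (∀ f : N →ₗ[Module.End K V] Module.End K V, f = 0) → Subsingleton N) := by
  have hzero : ∀ f : (Module.End K V ⧸ finRankIdeal K V) →ₗ[Module.End K V] Module.End K V,
      f = 0 := by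
    intro f
    set χ : Module.End K V := f (Submodule.Quotient.mk 1) with hχ
    have key : ∀ ψ : Module.End K V, ψ ∈ finRankIdeal K V → ψ * χ = 0 := by
      intro ψ hψ
      have h1 : (Submodule.Quotient.mk (ψ • (1 : Module.End K V)) :
          Module.End K V ⧸ finRankIdeal K V) = 0 := by
        rw [Submodule.Quotient.mk_eq_zero]
        simpa using hψ
      calc ψ * χ = ψ • f (Submodule.Quotient.mk 1) := rfl
        _ = f (ψ • Submodule.Quotient.mk 1) := (f.map_smul ψ _).symm
        _ = f 0 := by rw [← Submodule.Quotient.mk_smul, h1]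
        _ = 0 := f.map_zero
    have hχ0 : χ = 0 := by
      ext v
      by_contra hv
      simp only [LinearMap.zero_apply] at hv
      obtain ⟨g, hg⟩ : ∃ g : Module.Dual K V, g (χ v) ≠ 0 := by
        by_contra hall
        push_neg at hall
        exact hv ((Module.forall_dual_apply_eq_zero_iff K _).mp hall)
      set ψ : Module.End K V := LinearMap.smulRight g (χ v) with hψdef
      have hfin : ψ ∈ finRankIdeal K V := by
        show FiniteDimensional K (LinearMap.range ψ)
        have hle : LinearMap.range ψ ≤ K ∙ (χ v) := by
          rintro _ ⟨w, rfl⟩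
          exact Submodule.smul_mem _ _ (Submodule.mem_span_singleton_self _)
        exact Submodule.finiteDimensional_of_le hle
      have := congrFun (congrArg (DFunLike.coe) (key ψ hfin)) v
      simp only [hψdef, Module.End.mul_apply, LinearMap.smulRight_apply,
        LinearMap.zero_apply, smul_eq_zero] at this
      rcases this with h | h
      · exact hg h
      · exact hv h
    refine LinearMap.ext fun ρ => ?_
    obtain ⟨r, rfl⟩ := Submodule.Quotient.mk_surjective _ ρ
    have : (Submodule.Quotient.mk r : Module.End K V ⧸ finRankIdeal K V)
        = r • Submodule.Quotient.mk 1 := by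
      rw [← Submodule.Quotient.mk_smul, smul_eq_mul, mul_one]
    rw [this, f.map_smul, ← hχ, hχ0, smul_zero]
    rfl
  have hnt : Nontrivial (Module.End K V ⧸ finRankIdeal K V) := by
    refine Submodule.Quotient.nontrivial_iff.mpr ?_
    intro htop
    have h1 : (1 : Module.End K V) ∈ finRankIdeal K V := htop ▸ Submodule.mem_top
    have : FiniteDimensional K (LinearMap.range (1 : Module.End K V)) := h1
    rw [Module.End.one_eq_id, LinearMap.range_id] at this
    exact hV (Module.Finite.equiv (Submodule.topEquiv : (⊤ : Submodule K V) ≃ₗ[K] V))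
  refine ⟨hzero, hnt, fun h => ?_⟩
  have := h (Module.End K V ⧸ finRankIdeal K V) hzero
  exact (not_subsingleton_iff_nontrivial.mpr hnt) this
end

section
/- Let R be a ring, N a finitely presented left R-module, and M a left R-module that is an fp-cogenerator such that every finitely generated submodule of a finitely presented module is finitely presented (R left coherent). Given two quotient maps ε' : N ↠ N' and ε'' : N ↠ N'' in R-mod, the subgroup Hom_R(N', M) of Hom_R(N, M) is contained in the subgroup Hom_R(N'', M) if and only if there exists α : N'' → N' with ε' = α ∘ ε''. -/
/-- **Wood's criterion for inclusion of behaviors.**  Let `R` be left coherent (in the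
form: every finitely generated submodule of a finitely presented module is finitely
presented), `M` an fp-cogenerator (`Hom(−, M)` is faithful on finitely presented
modules), `N` finitely presented, and `ε' : N ↠ N'`, `ε'' : N ↠ N''` quotient maps in
`R`-mod.  Then the subgroup `Hom_R(N', M)` of `Hom_R(N, M)` is contained in the
subgroup `Hom_R(N'', M)` if and only if there exists `α : N'' → N'` with
`ε' = α ∘ ε''`. -/
theorem behavior_inclusion_iff (R : Type) [Ring R]
    (hcoh : ∀ (P : Type) [AddCommGroup P] [Module R P], Module.FinitePresentation R P →
      ∀ Q : Submodule R P, Q.FG → Module.FinitePresentation R Q)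
    (M : Type) [AddCommGroup M] [Module R M]
    (hcog : ∀ (N N' : Type) [AddCommGroup N] [Module R N] [AddCommGroup N'] [Module R N'],
      Module.FinitePresentation R N → Module.FinitePresentation R N' →
      ∀ g h : N →ₗ[R] N', (∀ φ : N' →ₗ[R] M, φ.comp g = φ.comp h) → g = h)
    (N N' N'' : Type) [AddCommGroup N] [Module R N] [AddCommGroup N'] [Module R N']
    [AddCommGroup N''] [Module R N'']
    (hN : Module.FinitePresentation R N) (hN' : Module.FinitePresentation R N')
    (hN'' : Module.FinitePresentation R N'')
    (ε' : N →ₗ[R] N') (ε'' : N →ₗ[R] N'')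
    (hε' : Function.Surjective ε') (hε'' : Function.Surjective ε'') :
    (Set.range (fun φ : N' →ₗ[R] M => φ.comp ε') ⊆
        Set.range (fun ψ : N'' →ₗ[R] M => ψ.comp ε'')) ↔
      ∃ α : N'' →ₗ[R] N', ε' = α.comp ε'' := by
  constructor
  · intro hsub
    -- K = ε'(ker ε'') is a f.g. submodule of N'
    haveI : Module.FinitePresentation R N := hN
    haveI : Module.Finite R N := inferInstance
    haveI : Module.FinitePresentation R N'' := hN''
    have hker : (LinearMap.ker ε'').FG := Module.FinitePresentation.fg_ker ε'' hε''
    set K : Submodule R N' := (LinearMap.ker ε'').map ε' with hK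
    have hKfg : K.FG := hker.map ε'
    have hKfp : Module.FinitePresentation R K := hcoh N' hN' K hKfg
    -- every φ : N' → M vanishes on K
    have hvanish : ∀ (φ : N' →ₗ[R] M) (x : N'), x ∈ K → φ x = 0 := by
      intro φ x hx
      obtain ⟨y, hy, rfl⟩ := hx
      obtain ⟨ψ, hψ⟩ := hsub ⟨φ, rfl⟩
      have := congrArg (fun f : N →ₗ[R] M => f y) hψ.symm
      simp only [LinearMap.comp_apply] at this ⊢
      rw [this, (LinearMap.mem_ker.mp hy)]
      simp
    -- hence K.subtype = 0 by the cogenerator property, so K = ⊥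
    have hsub0 : K.subtype = (0 : K →ₗ[R] N') := by
      apply hcog K N' hKfp hN'
      intro φ
      ext x
      simpa using hvanish φ x.1 x.2
    have hle : LinearMap.ker ε'' ≤ LinearMap.ker ε' := by
      intro x hx
      have hmem : ε' x ∈ K := ⟨x, hx, rfl⟩
      have := congrArg (fun f : K →ₗ[R] N' => f ⟨ε' x, hmem⟩) hsub0
      simpa using this
    -- factor ε' through ε''
    set e := (ε''.quotKerEquivOfSurjective hε'')
    refine ⟨(Submodule.liftQ _ ε' hle).comp e.symm.toLinearMap, ?_⟩
    ext x
    have hx : e.symm (ε'' x) = Submodule.Quotient.mk x := by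
      apply e.injective
      simp [e, LinearMap.quotKerEquivOfSurjective]
    simp [LinearMap.comp_apply, hx]
  · rintro ⟨α, rfl⟩
    rintro f ⟨φ, rfl⟩
    exact ⟨φ.comp α, by ext x; simp⟩
end
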